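/- Let each user j have per-job cost r_j = r_j(p), an affine function of a price vector p with positive coefficients, and demand x*_j(r_j) solving U_j'(x) = r_j γ x^{γ-1}. If for every user j the condition 0 < U_j''(x*_j) + γ r_j (x*_j)^{γ-2} < γ² r_j (x*_j)^{γ-2} holds, then the revenue ρ(p) = ∑_j r_j(p) · x*_j(r_j(p))^γ is strictly decreasing in each coordinate of p. -/

import Mathlib

open Real Set

private lemma revenue_anti (U : ℝ → ℝ) (γ : ℝ) (xs : ℝ → ℝ)
    (hU : ContDiff ℝ 2 U) (hγ0 : 0 < γ)
    (hcont : ContinuousOn xs (Ioi 0))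
    (hpos : ∀ r, 0 < r → 0 < xs r)
    (hfoc : ∀ r, 0 < r → deriv U (xs r) = r * γ * xs r ^ (γ - 1))
    (hcond : ∀ r, 0 < r →
      0 < deriv (deriv U) (xs r) + γ * r * xs r ^ (γ - 2) ∧
      deriv (deriv U) (xs r) + γ * r * xs r ^ (γ - 2) < γ ^ 2 * r * xs r ^ (γ - 2))
    {r1 r2 : ℝ} (h1 : 0 < r1) (h12 : r1 < r2) :
    r2 * xs r2 ^ γ < r1 * xs r1 ^ γ := by
  have h2 : 0 < r2 := h1.trans h12
  -- the second derivative exists everywhere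
  have hU1 : Differentiable ℝ (deriv U) := by
    have h2' : ContDiff ℝ ((1 : ℕ) + 1) U := by exact_mod_cast hU
    exact ((contDiff_succ_iff_deriv.mp h2').2.2).differentiable (by norm_num)
  set φ : ℝ → ℝ := fun x => deriv U x * x ^ (1 - γ) / γ with hφdef
  set ψ : ℝ → ℝ := fun x => deriv U x * x / γ with hψdef
  set φ' : ℝ → ℝ := fun x =>
    (deriv (deriv U) x * x ^ (1 - γ) + deriv U x * ((1 - γ) * x ^ (1 - γ - 1))) / γ with hφ'def
  set ψ' : ℝ → ℝ := fun x => (deriv (deriv U) x * x + deriv U x * 1) / γ with hψ'def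
  -- φ inverts xs
  have hφr : ∀ r, 0 < r → φ (xs r) = r := by
    intro r hr
    have hx : 0 < xs r := hpos r hr
    have e : xs r ^ (γ - 1) * xs r ^ (1 - γ) = 1 := by
      rw [← Real.rpow_add hx]; norm_num
    simp only [hφdef, hfoc r hr]
    field_simp
    linear_combination e
  -- derivative of φ
  have hφd : ∀ x : ℝ, 0 < x → HasDerivAt φ (φ' x) x := by
    intro x hx
    exact (((hU1 x).hasDerivAt).mul
      (Real.hasDerivAt_rpow_const (Or.inl hx.ne'))).div_const γ
  -- derivative of ψ
  have hψd : ∀ x : ℝ, HasDerivAt ψ (ψ' x) x := by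
    intro x
    exact (((hU1 x).hasDerivAt).mul (hasDerivAt_id x)).div_const γ
  -- φ' is negative on the graph of xs
  have hφ'neg : ∀ r, 0 < r → φ' (xs r) < 0 := by
    intro r hr
    have hx : 0 < xs r := hpos r hr
    set x := xs r
    have hA : (0:ℝ) < x ^ (1 - γ) := Real.rpow_pos_of_pos hx _
    have e1 : x ^ (γ - 2) * x ^ (1 - γ) = x ^ (-1 : ℝ) := by
      rw [← Real.rpow_add hx]; ring_nf
    have e2 : x ^ (γ - 1) * x ^ (1 - γ - 1) = x ^ (-1 : ℝ) := by
      rw [← Real.rpow_add hx]; ring_nf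
    have hc2 := (hcond r hr).2
    set Z := x ^ (-1 : ℝ) with hZ
    set u2 := deriv (deriv U) x with hu2
    have key : u2 * x ^ (1 - γ) + γ * r * Z < γ ^ 2 * r * Z := by
      have hmul := mul_lt_mul_of_pos_right hc2 hA
      calc u2 * x ^ (1 - γ) + γ * r * Z
          = (u2 + γ * r * x ^ (γ - 2)) * x ^ (1 - γ) := by linear_combination (-(γ * r)) * e1
        _ < γ ^ 2 * r * x ^ (γ - 2) * x ^ (1 - γ) := hmul
        _ = γ ^ 2 * r * Z := by linear_combination (γ ^ 2 * r) * e1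
    have hnum : deriv (deriv U) x * x ^ (1 - γ)
        + deriv U x * ((1 - γ) * x ^ (1 - γ - 1)) < 0 := by
      rw [hfoc r hr]
      calc u2 * x ^ (1 - γ) + r * γ * x ^ (γ - 1) * ((1 - γ) * x ^ (1 - γ - 1))
          = u2 * x ^ (1 - γ) + r * γ * (1 - γ) * Z := by linear_combination (r * γ * (1 - γ)) * e2
        _ < (γ ^ 2 * r * Z - γ * r * Z) + r * γ * (1 - γ) * Z := by linarith
        _ = 0 := by ring
    exact div_neg_of_neg_of_pos hnum hγ0
  -- ψ' is positive on the graph of xs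
  have hψ'pos : ∀ r, 0 < r → 0 < ψ' (xs r) := by
    intro r hr
    have hx : 0 < xs r := hpos r hr
    set x := xs r
    have e3 : x ^ (γ - 2) * x = x ^ (γ - 1) := by
      rw [← Real.rpow_add_one hx.ne']; ring_nf
    have hc1 := (hcond r hr).1
    have hnum : 0 < deriv (deriv U) x * x + deriv U x * 1 := by
      rw [hfoc r hr]
      calc (0:ℝ) < (deriv (deriv U) x + γ * r * x ^ (γ - 2)) * x := mul_pos hc1 hx
        _ = deriv (deriv U) x * x + γ * r * (x ^ (γ - 2) * x) := by ring
        _ = deriv (deriv U) x * x + r * γ * x ^ (γ - 1) * 1 := by rw [e3]; ring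
    exact div_pos hnum hγ0
  -- ψ computes the revenue
  have hψr : ∀ r, 0 < r → ψ (xs r) = r * xs r ^ γ := by
    intro r hr
    have hx : 0 < xs r := hpos r hr
    have e : xs r ^ γ = xs r ^ (γ - 1) * xs r := by
      rw [← Real.rpow_add_one hx.ne']; ring_nf
    simp only [hψdef, hfoc r hr]
    field_simp
    linear_combination (-1 : ℝ) * e
  have hx1 : 0 < xs r1 := hpos r1 h1
  have hx2 : 0 < xs r2 := hpos r2 h2
  -- Step A : xs r2 < xs r1
  have hxlt : xs r2 < xs r1 := by
    by_contra hcontra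
    push_neg at hcontra
    rcases eq_or_lt_of_le hcontra with heq | hlt
    · have : r1 = r2 := by rw [← hφr r1 h1, ← hφr r2 h2, heq]
      exact absurd this h12.ne
    · -- intermediate value: [xs r1, xs r2] ⊆ xs '' [r1, r2]
      have hIcc : Icc r1 r2 ⊆ Ioi 0 := fun r hr => lt_of_lt_of_le h1 hr.1
      have himg : Icc (xs r1) (xs r2) ⊆ xs '' Icc r1 r2 :=
        intermediate_value_Icc h12.le (hcont.mono hIcc)
      have hcφ : ContinuousOn φ (Icc (xs r1) (xs r2)) := fun x hx =>
        ((hφd x (lt_of_lt_of_le hx1 hx.1)).continuousAt).continuousWithinAt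
      obtain ⟨c, hc, hceq⟩ := exists_hasDerivAt_eq_slope φ φ' hlt hcφ
        (fun x hx => hφd x (lt_of_lt_of_le hx1 hx.1.le))
      obtain ⟨r, hr, hrc⟩ := himg (Ioo_subset_Icc_self hc)
      have hr0 : 0 < r := hIcc hr
      have hneg : φ' c < 0 := hrc ▸ hφ'neg r hr0
      rw [hceq, hφr r1 h1, hφr r2 h2] at hneg
      have : 0 < (r2 - r1) / (xs r2 - xs r1) :=
        div_pos (by linarith) (by linarith)
      linarith
  -- Step B : compare ψ along the decreasing xs
  have hIcc : Icc r1 r2 ⊆ Ioi 0 := fun r hr => lt_of_lt_of_le h1 hr.1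
  have himg : Icc (xs r2) (xs r1) ⊆ xs '' Icc r1 r2 :=
    intermediate_value_Icc' h12.le (hcont.mono hIcc)
  have hcψ : ContinuousOn ψ (Icc (xs r2) (xs r1)) := fun x hx =>
    ((hψd x).continuousAt).continuousWithinAt
  obtain ⟨c, hc, hceq⟩ := exists_hasDerivAt_eq_slope ψ ψ' hxlt hcψ
    (fun x _ => hψd x)
  obtain ⟨r, hr, hrc⟩ := himg (Ioo_subset_Icc_self hc)
  have hr0 : 0 < r := hIcc hr
  have hgt : 0 < ψ' c := hrc ▸ hψ'pos r hr0
  rw [hceq] at hgt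
  have hψlt : ψ (xs r2) < ψ (xs r1) := by
    have hd : 0 < xs r1 - xs r2 := by linarith
    have := (div_pos_iff.mp hgt)
    rcases this with ⟨hnum, _⟩ | ⟨_, hden⟩
    · linarith
    · linarith
  rw [hψr r1 h1, hψr r2 h2] at hψlt
  exact hψlt

/-- Under the condition `0 < U'' + γ r x^{γ-2} < γ² r x^{γ-2}`, revenue is
strictly decreasing in each coordinate of the price vector. -/
theorem stmt5 (n m : ℕ) (hn : 0 < n) (U : Fin n → ℝ → ℝ) (γ : ℝ)
    (a : Fin n → ℝ) (w : Fin n → Fin m → ℝ)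
    (xstar : Fin n → ℝ → ℝ)
    (hU : ∀ j, ContDiff ℝ 2 (U j))
    (hγ0 : 0 < γ) (hγ1 : γ ≤ 1)
    (ha : ∀ j, 0 ≤ a j) (hw : ∀ j i, 0 < w j i)
    (hcont : ∀ j, ContinuousOn (xstar j) (Ioi 0))
    (hpos : ∀ j r, 0 < r → 0 < xstar j r)
    (hfoc : ∀ j r, 0 < r → deriv (U j) (xstar j r) = r * γ * xstar j r ^ (γ - 1))
    (hcond : ∀ j r, 0 < r →
      0 < deriv (deriv (U j)) (xstar j r) + γ * r * xstar j r ^ (γ - 2) ∧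
      deriv (deriv (U j)) (xstar j r) + γ * r * xstar j r ^ (γ - 2)
        < γ ^ 2 * r * xstar j r ^ (γ - 2)) :
    ∀ p q : Fin m → ℝ, (∀ i, 0 < p i) → (∀ i, p i ≤ q i) → (∃ k, p k < q k) →
      (∑ j, (a j + ∑ i, w j i * q i) * xstar j (a j + ∑ i, w j i * q i) ^ γ) <
      ∑ j, (a j + ∑ i, w j i * p i) * xstar j (a j + ∑ i, w j i * p i) ^ γ := by
  intro p q hp hpq ⟨k, hk⟩
  have hne : (Finset.univ : Finset (Fin n)).Nonempty := by
    have : Nonempty (Fin n) := Fin.pos_iff_nonempty.mp hn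
    exact Finset.univ_nonempty
  refine Finset.sum_lt_sum_of_nonempty hne ?_
  intro j _
  have hr1 : 0 < a j + ∑ i, w j i * p i := by
    have hsum : 0 < ∑ i, w j i * p i :=
      Finset.sum_pos (fun i _ => mul_pos (hw j i) (hp i)) ⟨k, Finset.mem_univ k⟩
    linarith [ha j]
  have hlt : (a j + ∑ i, w j i * p i) < a j + ∑ i, w j i * q i := by
    have : (∑ i, w j i * p i) < ∑ i, w j i * q i :=
      Finset.sum_lt_sum (fun i _ => mul_le_mul_of_nonneg_left (hpq i) (hw j i).le)
        ⟨k, Finset.mem_univ k, mul_lt_mul_of_pos_left hk (hw j k)⟩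
    linarith
  exact revenue_anti (U j) γ (xstar j) (hU j) hγ0 (hcont j) (hpos j) (hfoc j)
    (hcond j) hr1 hlt
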